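/- arXiv:1905.09273 — 2 statements merged into one kernel-verified Lean document; each statement's English description precedes it below -/
import Mathlib

section
/- Define P_{n,k,l}(x) = ∑_{s=0}^{l} (-1)^s C(n-k, s) C(n-s-1, l-s) x^{n-2s}. Then for integers n ≥ 1, 0 ≤ k ≤ n-1, and any integer l, the sum ∑_{s=0}^{n} (-1)^s P_{n,k+1,s}(x) P_{n+1,s+1,l}(x) equals (-1)^k (δ_{k,l} x^3 + δ_{k,l-1}(x^3 − x)). -/
/-- Binomial coefficient C(a,b) for integer arguments, with the convention
    C(a,b) = 0 when b < 0 or b > a. -/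
def intChoose (a b : ℤ) : ℤ :=
  if 0 ≤ b ∧ b ≤ a then (a.toNat.choose b.toNat : ℤ) else 0

lemma intChoose_natCast (a b : ℕ) : intChoose a b = a.choose b := by
  unfold intChoose
  split
  · simp
  · rename_i h
    rw [Nat.choose_eq_zero_of_lt (by omega)]
    simp

lemma intChoose_neg (a b : ℤ) (h : b < 0) : intChoose a b = 0 := by
  unfold intChoose; rw [if_neg]; omega

lemma intChoose_gt (a b : ℤ) (h : a < b) : intChoose a b = 0 := by
  unfold intChoose; rw [if_neg]; omega

lemma zpow_helper {K : Type*} [Field K] (x : K) (hx : x ≠ 0) (n j : ℕ) :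
    (x ^ ((n:ℤ) - 2*(j:ℤ))) = x^n * (x⁻¹^2)^j := by
  rw [zpow_sub₀ hx, zpow_natCast]
  rw [show (2*(j:ℤ)) = ((2*j : ℕ) : ℤ) by push_cast; ring, zpow_natCast]
  rw [div_eq_mul_inv, pow_mul, ← inv_pow, inv_pow x 2]

/-- P_{n,k,l}(x) = ∑_{s=0}^{l} (-1)^s C(n-k,s) C(n-s-1,l-s) x^{n-2s}, as a function of
    an (invertible) field element x; for l < 0 all terms vanish (the sum degenerates to
    the single s = 0 term containing C(n-1,l) = 0), so P_{n,k,l} = 0 for l < 0. -/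
def Ppoly {K : Type*} [Field K] (x : K) (n k l : ℤ) : K :=
  ∑ s ∈ Finset.range (l.toNat + 1),
    (-1 : K) ^ s * (intChoose (n - k) (s : ℤ) : K) *
      (intChoose (n - (s : ℤ) - 1) (l - (s : ℤ)) : K) * x ^ (n - 2 * (s : ℤ))

lemma Ppoly_eq {K : Type*} [Field K] (x : K) (hx : x ≠ 0) (k' m l : ℕ) (hl : l ≤ k'+m) :
    Ppoly x ((k'+m+1 : ℕ) : ℤ) ((k' : ℤ)+1) (l : ℤ) =
    ∑ j ∈ Finset.range (l+1),
      (-1:K)^j * ((m.choose j : ℤ) : K) * (((k'+m-j).choose (l-j) : ℤ) : K)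
        * (x^(k'+m+1) * (x⁻¹^2)^j) := by
  unfold Ppoly
  rw [Int.toNat_natCast]
  refine Finset.sum_congr rfl fun j hj => ?_
  rw [Finset.mem_range] at hj
  have hj' : j ≤ l := by omega
  rw [show ((k'+m+1 : ℕ) : ℤ) - ((k':ℤ)+1) = (m : ℕ) by push_cast; ring,
    show ((k'+m+1 : ℕ) : ℤ) - (j:ℤ) - 1 = ((k'+m-j : ℕ) : ℤ) by push_cast [Nat.cast_sub (by omega : j ≤ k'+m)]; ring,
    show (l:ℤ) - (j:ℤ) = ((l-j : ℕ) : ℤ) by push_cast [Nat.cast_sub hj']; ring,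
    intChoose_natCast, intChoose_natCast,
    zpow_helper x hx (k'+m+1) j]

lemma Ppoly_zero_of_ge {K : Type*} [Field K] (x : K) (n k l : ℤ) (h : n ≤ l) :
    Ppoly x n k l = 0 := by
  unfold Ppoly
  refine Finset.sum_eq_zero fun j hj => ?_
  have : intChoose (n - (j:ℤ) - 1) (l - (j:ℤ)) = 0 := by
    rcases lt_or_ge (l - (j:ℤ)) 0 with h' | h'
    · exact intChoose_neg _ _ h'
    · exact intChoose_gt _ _ (by omega)
  rw [this]
  push_cast
  ring

lemma Ppoly_zero_of_neg {K : Type*} [Field K] (x : K) (n k l : ℤ) (h : l < 0) :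
    Ppoly x n k l = 0 := by
  unfold Ppoly
  rw [show l.toNat = 0 by omega]
  rw [Finset.sum_range_one, Nat.cast_zero, intChoose_neg _ _ (by omega : l - (0:ℤ) < 0)]
  push_cast
  ring

open Polynomial Finset in
lemma lemB {K : Type*} [Field K] (x : K) (hx : x ≠ 0) (k' m : ℕ) (A B : Polynomial K) :
    ∑ s ∈ range (k'+m+1),
      C (Ppoly x ((k'+m+1:ℕ):ℤ) ((k':ℤ)+1) (s:ℤ)) * (A^s * B^(k'+m-s))
    = C (x^(k'+m+1)) * ((A+B)^k' * (B + C (1-x⁻¹^2) * A)^m) := by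
  -- step 1 : expand Ppoly
  have key : ∀ s ∈ Finset.Ico 0 (k'+m+1),
      C (Ppoly x ((k'+m+1:ℕ):ℤ) ((k':ℤ)+1) (s:ℤ)) * (A^s * B^(k'+m-s))
      = ∑ j ∈ Finset.Ico 0 (s+1),
          ((-1:Polynomial K)^j * ((m.choose j : Polynomial K)) * (((k'+m-j).choose (s-j) : Polynomial K))
            * (C (x^(k'+m+1)) * (C (x⁻¹^2))^j)) * (A^s * B^(k'+m-s)) := by
    intro s hs
    rw [Finset.mem_Ico] at hs
    rw [Ppoly_eq x hx k' m s (by omega), map_sum, Finset.sum_mul, Nat.Ico_zero_eq_range]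
    refine Finset.sum_congr rfl fun j hj => ?_
    simp only [map_mul, map_pow, map_neg, map_one, Int.cast_natCast, map_natCast]
  rw [show range (k'+m+1) = Finset.Ico 0 (k'+m+1) from (Nat.Ico_zero_eq_range _).symm,
    Finset.sum_congr rfl key, ← Finset.sum_Ico_Ico_comm]
  -- step 2 : inner sums are A^j * (A+B)^(k'+m-j) by the binomial theorem
  have key2 : ∀ j ∈ Finset.Ico 0 (k'+m+1),
      (∑ s ∈ Finset.Ico j (k'+m+1),
        ((-1:Polynomial K)^j * ((m.choose j : Polynomial K)) * (((k'+m-j).choose (s-j) : Polynomial K))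
            * (C (x^(k'+m+1)) * (C (x⁻¹^2))^j)) * (A^s * B^(k'+m-s)))
      = ((-1:Polynomial K)^j * ((m.choose j : Polynomial K)) * (C (x^(k'+m+1)) * (C (x⁻¹^2))^j))
          * (A^j * (A+B)^(k'+m-j)) := by
    intro j hj
    rw [Finset.mem_Ico] at hj
    rw [Finset.sum_Ico_eq_sum_range]
    have hR : k'+m+1-j = (k'+m-j)+1 := by omega
    rw [hR, add_pow A B (k'+m-j)]
    simp only [Finset.mul_sum]
    refine Finset.sum_congr rfl fun t ht => ?_
    rw [Finset.mem_range] at ht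
    rw [show j+t-j = t by omega, show k'+m-(j+t) = (k'+m-j)-t by omega,
      show j+t = t+j by omega, pow_add A t j]
    ring
  rw [Finset.sum_congr rfl key2, Nat.Ico_zero_eq_range]
  -- step 3 : restrict to range (m+1)
  rw [← Finset.sum_subset (Finset.range_subset_range.mpr (by omega : m+1 ≤ k'+m+1))
    (fun j hj hj' => by
      rw [Finset.mem_range] at hj hj'
      rw [Nat.choose_eq_zero_of_lt (by omega), Nat.cast_zero]
      ring)]
  -- step 4 : binomial theorem again
  rw [show B + C (1-x⁻¹^2) * A = (-(C (x⁻¹^2) * A)) + (A + B) by rw [map_sub, map_one]; ring,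
    add_pow (-(C (x⁻¹^2) * A)) (A+B) m, Finset.mul_sum, Finset.mul_sum]
  refine Finset.sum_congr rfl fun j hj => ?_
  rw [Finset.mem_range] at hj
  rw [show k'+m-j = (m-j)+k' by omega, pow_add (A+B),
    show (-(C (x⁻¹^2) * A)) = (-1 : Polynomial K) * (C (x⁻¹^2) * A) by ring, mul_pow, mul_pow]
  ring

open Polynomial Finset in
lemma coeffP {K : Type*} [Field K] (x : K) (hx : x ≠ 0) (k' m lt : ℕ) :
    Ppoly x ((k'+m+1:ℕ):ℤ) ((k':ℤ)+1) (lt:ℤ)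
    = (C (x^(k'+m+1)) * ((X+1)^k' * (1 + C (1-x⁻¹^2) * X)^m)).coeff lt := by
  rw [← lemB x hx k' m X 1]
  rw [Polynomial.finset_sum_coeff]
  simp only [one_pow, mul_one, Polynomial.coeff_C_mul, Polynomial.coeff_X_pow, mul_ite,
    mul_one, mul_zero]
  rw [Finset.sum_ite_eq (Finset.range (k'+m+1)) lt]
  split
  · rfl
  · rename_i h
    rw [Finset.mem_range] at h
    exact Ppoly_zero_of_ge x _ _ _ (by exact_mod_cast by omega)

open Polynomial Finset in
lemma claimT {K : Type*} [Field K] (x : K) (hx : x ≠ 0) (n k : ℕ) (hn : 1 ≤ n) (hk : k ≤ n-1) :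
    ∑ s ∈ range (n+1), C ((-1:K)^s * Ppoly x (n:ℤ) ((k:ℤ)+1) (s:ℤ)) *
      (C (x^(n+1)) * ((X+1)^s * (1 + C (1-x⁻¹^2) * X)^(n-s)))
    = C ((-1:K)^k * x^3) * X^k + C ((-1:K)^k * (x^3 - x)) * X^(k+1) := by
  have hlb := lemB x hx k (n-1-k) (-(X+1)) (1 + C (1-x⁻¹^2) * X)
  rw [show k+(n-1-k) = n-1 by omega, show n-1+1 = n by omega] at hlb
  have step2 : ∀ s ∈ range n,
      C ((-1:K)^s * Ppoly x (n:ℤ) ((k:ℤ)+1) (s:ℤ)) *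
        (C (x^(n+1)) * ((X+1)^s * (1 + C (1-x⁻¹^2) * X)^(n-s)))
      = (C (x^(n+1)) * (1 + C (1-x⁻¹^2) * X)) *
        (C (Ppoly x (n:ℤ) ((k:ℤ)+1) (s:ℤ)) *
          ((-(X+1))^s * (1 + C (1-x⁻¹^2) * X)^(n-1-s))) := by
    intro s hs
    rw [Finset.mem_range] at hs
    rw [show n-s = (n-1-s)+1 by omega, pow_succ]
    simp only [map_mul, map_pow, map_neg, map_one]
    rw [show ((-(X+1)) : Polynomial K)^s = (-1:Polynomial K)^s * (X+1)^s by
      rw [← neg_one_mul, mul_pow]]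
    ring
  rw [Finset.sum_range_succ, Ppoly_zero_of_ge x _ _ _ (le_refl (n:ℤ)), mul_zero, map_zero,
    zero_mul, add_zero, Finset.sum_congr rfl step2, ← Finset.mul_sum, hlb,
    show -(X+1) + (1 + C (1-x⁻¹^2) * X) = C (-(x⁻¹^2)) * X by
      simp only [map_neg, map_sub, map_one]; ring,
    show (1 + C (1-x⁻¹^2) * X) + C (1-x⁻¹^2) * -(X+1) = C ((x⁻¹:K)^2) by
      simp only [map_sub, map_one, map_pow]; ring]
  -- now reduce to scalar identities
  have h1 : ((x⁻¹:K)^2)^k * (x⁻¹^2)^(n-1-k) = (x⁻¹)^(2*(n-1)) := by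
    rw [← pow_add, show k+(n-1-k) = n-1 by omega, ← pow_mul]
  have h2 : (x:K)^(n+1) * x^n = x^(2*(n-1)) * x^3 := by
    rw [← pow_add, ← pow_add]; congr 1; omega
  have hA : x^(n+1) * x^n * (-((x⁻¹:K)^2))^k * (x⁻¹^2)^(n-1-k) = (-1:K)^k * x^3 := by
    calc x^(n+1) * x^n * (-((x⁻¹:K)^2))^k * (x⁻¹^2)^(n-1-k)
        = ((-1:K))^k * (x^(n+1) * x^n) * ((x⁻¹^2)^k * (x⁻¹^2)^(n-1-k)) := by
          rw [neg_pow]; ring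
      _ = (-1:K)^k * (x^(2*(n-1)) * x^3) * (x⁻¹)^(2*(n-1)) := by rw [h1, h2]
      _ = (-1:K)^k * x^3 * (x^(2*(n-1)) * (x⁻¹)^(2*(n-1))) := by ring
      _ = (-1:K)^k * x^3 := by rw [← mul_pow, mul_inv_cancel₀ hx, one_pow, mul_one]
  have hx3 : (x:K)^3 * x⁻¹^2 = x := by
    calc (x:K)^3 * x⁻¹^2 = x * (x*x⁻¹)^2 := by rw [mul_pow]; ring
      _ = x := by rw [mul_inv_cancel₀ hx, one_pow, mul_one]
  have hB : ((-1:K)^k * x^3) * (1-x⁻¹^2) = (-1:K)^k * (x^3 - x) := by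
    linear_combination (-((-1:K)^k)) * hx3
  have hC : C ((-1:K)^k * x^3)
      = C (x^(n+1)) * C (x^n) * (C (-((x⁻¹:K)^2)))^k * (C ((x⁻¹:K)^2))^(n-1-k) := by
    rw [← map_pow, ← map_pow, ← map_mul, ← map_mul, ← map_mul]
    exact congrArg C hA.symm
  calc C (x^(n+1)) * (1 + C (1-x⁻¹^2) * X) *
        (C (x^n) * ((C (-((x⁻¹:K)^2)) * X)^k * (C ((x⁻¹:K)^2))^(n-1-k)))
      = C ((-1:K)^k * x^3) * X^k * (1 + C (1-x⁻¹^2) * X) := by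
        rw [hC, mul_pow]; ring
    _ = C ((-1:K)^k * x^3) * X^k + C (((-1:K)^k * x^3) * (1-x⁻¹^2)) * X^(k+1) := by
        rw [map_mul (C) (((-1:K)^k * x^3)) (1-x⁻¹^2), pow_succ]; ring
    _ = _ := by rw [hB]

open Polynomial Finset

/-- ∑_{s=0}^{n} (-1)^s P_{n,k+1,s}(x) P_{n+1,s+1,l}(x)
      = (-1)^k (δ_{k,l} x³ + δ_{k,l-1}(x³ − x)), for n ≥ 1, 0 ≤ k ≤ n-1, any integer l. -/
theorem Ppoly_convolution_one {K : Type*} [Field K] (x : K) (hx : x ≠ 0)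
    (n k : ℕ) (hn : 1 ≤ n) (hk : k ≤ n - 1) (l : ℤ) :
    ∑ s ∈ Finset.range (n + 1),
        (-1 : K) ^ s * Ppoly x (n : ℤ) ((k : ℤ) + 1) (s : ℤ) *
          Ppoly x ((n : ℤ) + 1) ((s : ℤ) + 1) l
      = (-1 : K) ^ k *
          ((if (k : ℤ) = l then 1 else 0) * x ^ 3 +
            (if (k : ℤ) = l - 1 then 1 else 0) * (x ^ 3 - x)) := by
  rcases lt_or_ge l 0 with hl | hl
  · rw [Finset.sum_eq_zero fun s _ => by
      rw [Ppoly_zero_of_neg x _ _ _ hl, mul_zero],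
      if_neg (by omega), if_neg (by omega)]
    ring
  · obtain ⟨lt, rfl⟩ : ∃ lt : ℕ, l = (lt:ℤ) := ⟨l.toNat, (Int.toNat_of_nonneg hl).symm⟩
    have hcoef : ∀ s, s ≤ n → Ppoly x ((n:ℤ)+1) ((s:ℤ)+1) (lt:ℤ)
        = (C (x^(n+1)) * ((X+1)^s * (1 + C (1-x⁻¹^2) * X)^(n-s))).coeff lt := by
      intro s hs
      have h := coeffP x hx s (n-s) lt
      rw [show s+(n-s)+1 = n+1 by omega] at h
      rw [show ((n:ℤ))+1 = ((n+1:ℕ):ℤ) by push_cast; ring]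
      exact h
    calc ∑ s ∈ Finset.range (n + 1),
        (-1 : K) ^ s * Ppoly x (n : ℤ) ((k : ℤ) + 1) (s : ℤ) *
          Ppoly x ((n : ℤ) + 1) ((s : ℤ) + 1) (lt:ℤ)
        = ∑ s ∈ range (n+1),
            (C ((-1:K)^s * Ppoly x (n:ℤ) ((k:ℤ)+1) (s:ℤ)) *
              (C (x^(n+1)) * ((X+1)^s * (1 + C (1-x⁻¹^2) * X)^(n-s)))).coeff lt := by
          refine Finset.sum_congr rfl fun s hs => ?_
          rw [Finset.mem_range] at hs
          rw [hcoef s (by omega)]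
          simp only [Polynomial.coeff_C_mul]
      _ = (∑ s ∈ range (n+1),
            C ((-1:K)^s * Ppoly x (n:ℤ) ((k:ℤ)+1) (s:ℤ)) *
              (C (x^(n+1)) * ((X+1)^s * (1 + C (1-x⁻¹^2) * X)^(n-s)))).coeff lt :=
          (Polynomial.finset_sum_coeff _ _ _).symm
      _ = (C ((-1:K)^k * x^3) * X^k + C ((-1:K)^k * (x^3 - x)) * X^(k+1)).coeff lt := by
          rw [claimT x hx n k hn hk]
      _ = _ := by
          rw [Polynomial.coeff_add, Polynomial.coeff_C_mul, Polynomial.coeff_C_mul,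
            Polynomial.coeff_X_pow, Polynomial.coeff_X_pow,
            if_congr (show ((k:ℤ) = (lt:ℤ)) ↔ (lt = k) by omega) rfl rfl,
            if_congr (show ((k:ℤ) = (lt:ℤ) - 1) ↔ (lt = k+1) by omega) rfl rfl]
          split_ifs <;> first | omega | ring
end

section
/- For the XXZ ansatz with cos γ = c, sin γ = s (c,s nonzero, c² + s² = 1), ξ ≠ 0, define M_{n;k,l} = ((ξ−ξ⁻¹)/((ξ+ξ⁻¹)s))·P_{n,k+1,l}(c) − (2/((ξ+ξ⁻¹)c))·P_{n,k+1,l-1}(c). Then for integers n ≥ 1, 0 ≤ k ≤ n-1, 0 ≤ l ≤ n+1 with k − l odd, the matrix element A_{k,l} = ∑_{t=0}^{n} (−1)^t M_{n;k,t} M_{n+1;t,l} equals (−1)^{k+1} c · δ_{k,l-1}. -/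
/-- The XXZ matrix elements
    M_{n;k,l} = ((ξ−ξ⁻¹)/((ξ+ξ⁻¹)s))·P_{n,k+1,l}(c) − (2/((ξ+ξ⁻¹)c))·P_{n,k+1,l-1}(c). -/
def MXXZ {K : Type*} [Field K] (c s ξ : K) (n k : ℕ) (l : ℤ) : K :=
  ((ξ - ξ⁻¹) / ((ξ + ξ⁻¹) * s)) * Ppoly c (n : ℤ) ((k : ℤ) + 1) l -
    (2 / ((ξ + ξ⁻¹) * c)) * Ppoly c (n : ℤ) ((k : ℤ) + 1) (l - 1)

open Finset

lemma intChoose_of_neg {a b : ℤ} (h : b < 0) : intChoose a b = 0 := by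
  unfold intChoose; rw [if_neg (by omega)]

lemma intChoose_of_gt {a b : ℤ} (h : a < b) : intChoose a b = 0 := by
  unfold intChoose; rw [if_neg (by omega)]

lemma intChoose_negone (b : ℤ) : intChoose (-1) b = 0 := by
  unfold intChoose; rw [if_neg (by omega)]

lemma intChoose_zero_eq (b : ℤ) : intChoose 0 b = if b = 0 then 1 else 0 := by
  unfold intChoose
  split_ifs with h1 h2 h2
  · subst h2; simp
  · omega
  · omega
  · rfl

lemma intChoose_self {a : ℤ} (ha : 0 ≤ a) : intChoose a a = 1 := by
  unfold intChoose
  rw [if_pos ⟨ha, le_refl _⟩, Nat.choose_self]; norm_num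

lemma intChoose_pascal {a : ℤ} (ha : 0 ≤ a) (b : ℤ) :
    intChoose (a + 1) b = intChoose a b + intChoose a (b - 1) := by
  rcases lt_trichotomy b 0 with hb | hb | hb
  · rw [intChoose_of_neg hb, intChoose_of_neg hb, intChoose_of_neg (by omega)]; ring
  · subst hb
    rw [intChoose_of_neg (by norm_num : (0:ℤ)-1 < 0)]
    unfold intChoose
    rw [if_pos (by omega), if_pos (by omega)]
    simp
  · by_cases h1 : b ≤ a
    · unfold intChoose
      rw [if_pos (by omega), if_pos (by omega), if_pos (by omega)]
      have h2 : (a+1).toNat = a.toNat + 1 := by omega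
      have h3 : b.toNat = (b-1).toNat + 1 := by omega
      rw [h2, h3, Nat.choose_succ_succ]
      push_cast; ring
    · by_cases h2 : b = a + 1
      · subst h2
        have h3 : a + 1 - 1 = a := by ring
        rw [h3, intChoose_self (by omega), intChoose_of_gt (by omega : a < a + 1),
          intChoose_self ha]
        ring
      · rw [intChoose_of_gt (by omega), intChoose_of_gt (by omega),
          intChoose_of_gt (by omega)]
        ring

lemma intChoose_symm {a : ℤ} (ha : 0 ≤ a) (b : ℤ) :
    intChoose a b = intChoose a (a - b) := by
  by_cases h : 0 ≤ b ∧ b ≤ a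
  · unfold intChoose
    rw [if_pos h, if_pos ⟨by omega, by omega⟩]
    have h2 : (a - b).toNat = a.toNat - b.toNat := by omega
    rw [h2, Nat.choose_symm (by omega)]
  · rcases (by omega : b < 0 ∨ a < b) with h1 | h1
    · rw [intChoose_of_neg h1, intChoose_of_gt (by omega)]
    · rw [intChoose_of_gt h1, intChoose_of_neg (by omega)]

lemma intChoose_one_eq (v : ℤ) :
    intChoose 1 v = intChoose 0 v + intChoose 0 (v - 1) := by
  have := intChoose_pascal (le_refl (0:ℤ)) v
  simpa using this

lemma core0 (m : ℕ) (u : ℤ) :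
    ∑ j ∈ Finset.range (m+1), (-1:ℤ)^j * intChoose m j * intChoose ((m:ℤ) - j) u
      = intChoose 0 (u - m) := by
  induction m generalizing u with
  | zero => simp [intChoose_self le_rfl]
  | succ m ih =>
    have h1 : ∀ v : ℤ, ∑ j ∈ Finset.range (m+1),
        (-1:ℤ)^j * intChoose m j * intChoose ((m:ℤ) + 1 - j) v = intChoose 1 (v - m) := by
      intro v
      have hsp : ∀ j ∈ Finset.range (m+1),
          (-1:ℤ)^j * intChoose m j * intChoose ((m:ℤ) + 1 - j) v
          = (-1:ℤ)^j * intChoose m j * intChoose ((m:ℤ) - j) v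
            + (-1:ℤ)^j * intChoose m j * intChoose ((m:ℤ) - j) (v-1) := by
        intro j hj
        have hj' : j ≤ m := Finset.mem_range_succ_iff.mp hj
        have hp := intChoose_pascal (a := (m:ℤ) - j) (by omega) v
        have he : (m:ℤ) - j + 1 = (m:ℤ) + 1 - j := by ring
        rw [he] at hp
        rw [hp]; ring
      rw [Finset.sum_congr rfl hsp, Finset.sum_add_distrib, ih v, ih (v-1),
        intChoose_one_eq]
      ring_nf
    push_cast
    have hsp : ∀ j ∈ Finset.range (m+2),
        (-1:ℤ)^j * intChoose ((m:ℤ)+1) j * intChoose ((m:ℤ) + 1 - j) u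
        = (-1:ℤ)^j * intChoose m j * intChoose ((m:ℤ) + 1 - j) u
          + (-1:ℤ)^j * intChoose m (j-1) * intChoose ((m:ℤ) + 1 - j) u := by
      intro j hj
      rw [intChoose_pascal (by omega) j]; ring
    rw [Finset.sum_congr rfl hsp, Finset.sum_add_distrib]
    have hA : ∑ j ∈ Finset.range (m+2),
        (-1:ℤ)^j * intChoose m j * intChoose ((m:ℤ) + 1 - j) u = intChoose 1 (u - m) := by
      rw [Finset.sum_range_succ]
      have : intChoose (m:ℤ) ((m:ℤ)+1) = 0 := intChoose_of_gt (by omega)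
      push_cast [this]
      rw [h1 u]; ring
    have hB : ∑ j ∈ Finset.range (m+2),
        (-1:ℤ)^j * intChoose m ((j:ℤ)-1) * intChoose ((m:ℤ) + 1 - j) u
        = - intChoose 0 (u - m) := by
      rw [Finset.sum_range_succ']
      have h0 : (-1:ℤ)^0 * intChoose m ((0:ℤ)-1) * intChoose ((m:ℤ) + 1 - 0) u = 0 := by
        rw [intChoose_of_neg (by omega)]; ring
      push_cast at h0 ⊢
      rw [h0, add_zero]
      have hsp2 : ∀ i ∈ Finset.range (m+1),
          (-1:ℤ)^(i+1) * intChoose m ((i:ℤ)+1-1) * intChoose ((m:ℤ) + 1 - ((i:ℤ)+1)) u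
          = -((-1:ℤ)^i * intChoose m i * intChoose ((m:ℤ) - i) u) := by
        intro i hi
        have e1 : (i:ℤ)+1-1 = (i:ℤ) := by ring
        have e2 : (m:ℤ) + 1 - ((i:ℤ)+1) = (m:ℤ) - i := by ring
        rw [e1, e2, pow_succ]; ring
      rw [Finset.sum_congr rfl hsp2, Finset.sum_neg_distrib, ih u]
    rw [hA, hB, intChoose_one_eq]
    ring_nf

lemma core1 (m : ℕ) (u : ℤ) :
    ∑ j ∈ Finset.range (m+1), (-1:ℤ)^j * intChoose m j * intChoose ((m:ℤ) + 1 - j) u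
      = intChoose 1 (u - m) := by
  have hsp : ∀ j ∈ Finset.range (m+1),
      (-1:ℤ)^j * intChoose m j * intChoose ((m:ℤ) + 1 - j) u
      = (-1:ℤ)^j * intChoose m j * intChoose ((m:ℤ) - j) u
        + (-1:ℤ)^j * intChoose m j * intChoose ((m:ℤ) - j) (u-1) := by
    intro j hj
    have hj' : j ≤ m := Finset.mem_range_succ_iff.mp hj
    have hp := intChoose_pascal (a := (m:ℤ) - j) (by omega) u
    have he : (m:ℤ) - j + 1 = (m:ℤ) + 1 - j := by ring
    rw [he] at hp
    rw [hp]; ring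
  rw [Finset.sum_congr rfl hsp, Finset.sum_add_distrib, core0 m u, core0 m (u-1),
    intChoose_one_eq]
  ring_nf

lemma coreB0 (m : ℕ) (r : ℤ) :
    ∑ s ∈ Finset.range (m+1), (-1:ℤ)^s * intChoose m s * intChoose s r
      = (-1:ℤ)^m * intChoose 0 (r - m) := by
  induction m generalizing r with
  | zero => simp [intChoose_self le_rfl]
  | succ m ih =>
    have hB1 : ∀ v : ℤ, ∑ s ∈ Finset.range (m+1),
        (-1:ℤ)^s * intChoose m s * intChoose ((s:ℤ)+1) v
        = (-1:ℤ)^m * intChoose 1 (v - m) := by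
      intro v
      have hsp : ∀ s ∈ Finset.range (m+1),
          (-1:ℤ)^s * intChoose m s * intChoose ((s:ℤ)+1) v
          = (-1:ℤ)^s * intChoose m s * intChoose s v
            + (-1:ℤ)^s * intChoose m s * intChoose s (v-1) := by
        intro s hs
        rw [intChoose_pascal (by positivity) v]; ring
      rw [Finset.sum_congr rfl hsp, Finset.sum_add_distrib, ih v, ih (v-1),
        intChoose_one_eq]
      ring_nf
    push_cast
    have hsp : ∀ s ∈ Finset.range (m+2),
        (-1:ℤ)^s * intChoose ((m:ℤ)+1) s * intChoose s r
        = (-1:ℤ)^s * intChoose m s * intChoose s r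
          + (-1:ℤ)^s * intChoose m ((s:ℤ)-1) * intChoose s r := by
      intro s hs
      rw [intChoose_pascal (by omega) s]; ring
    rw [Finset.sum_congr rfl hsp, Finset.sum_add_distrib]
    have hA : ∑ s ∈ Finset.range (m+2),
        (-1:ℤ)^s * intChoose m s * intChoose s r = (-1:ℤ)^m * intChoose 0 (r - m) := by
      rw [Finset.sum_range_succ]
      have h0 : intChoose (m:ℤ) ((m:ℤ)+1) = 0 := intChoose_of_gt (by omega)
      push_cast [h0]
      rw [ih r]; ring
    have hB : ∑ s ∈ Finset.range (m+2),
        (-1:ℤ)^s * intChoose m ((s:ℤ)-1) * intChoose s r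
        = -((-1:ℤ)^m * intChoose 1 (r - m)) := by
      rw [Finset.sum_range_succ']
      have h0 : (-1:ℤ)^0 * intChoose m ((0:ℤ)-1) * intChoose (0:ℤ) r = 0 := by
        rw [intChoose_of_neg (by omega)]; ring
      push_cast at h0 ⊢
      rw [h0, add_zero]
      have hsp2 : ∀ i ∈ Finset.range (m+1),
          (-1:ℤ)^(i+1) * intChoose m ((i:ℤ)+1-1) * intChoose ((i:ℤ)+1) r
          = -((-1:ℤ)^i * intChoose m i * intChoose ((i:ℤ)+1) r) := by
        intro i hi
        have e1 : (i:ℤ)+1-1 = (i:ℤ) := by ring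
        rw [e1, pow_succ]; ring
      rw [Finset.sum_congr rfl hsp2, Finset.sum_neg_distrib, hB1 r]
    rw [hA, hB, intChoose_one_eq]
    ring_nf

lemma coreB1 (m : ℕ) (r : ℤ) :
    ∑ s ∈ Finset.range (m+1), (-1:ℤ)^s * intChoose m s * intChoose ((s:ℤ)+1) r
      = (-1:ℤ)^m * intChoose 1 (r - m) := by
  have hsp : ∀ s ∈ Finset.range (m+1),
      (-1:ℤ)^s * intChoose m s * intChoose ((s:ℤ)+1) r
      = (-1:ℤ)^s * intChoose m s * intChoose s r
        + (-1:ℤ)^s * intChoose m s * intChoose s (r-1) := by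
    intro s hs
    rw [intChoose_pascal (by positivity) r]; ring
  rw [Finset.sum_congr rfl hsp, Finset.sum_add_distrib, coreB0 m r, coreB0 m (r-1),
    intChoose_one_eq]
  ring_nf

lemma hT0 (n s : ℕ) (hs : s + 1 ≤ n) (u : ℤ) :
    ∑ t ∈ Finset.range (n+1),
        (-1:ℤ)^t * intChoose ((n:ℤ)-s-1) ((t:ℤ)-s) * intChoose ((n:ℤ)-t) u
      = (-1:ℤ)^s * intChoose 1 (u - ((n:ℤ)-s-1)) := by
  set m : ℕ := n - 1 - s with hm
  have hmn : n = s + 1 + m := by omega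
  rw [Finset.range_eq_Ico, ← Finset.sum_Ico_consecutive _ (Nat.zero_le s) (by omega : s ≤ n+1)]
  have hz : ∑ t ∈ Finset.Ico 0 s,
      (-1:ℤ)^t * intChoose ((n:ℤ)-s-1) ((t:ℤ)-s) * intChoose ((n:ℤ)-t) u = 0 := by
    apply Finset.sum_eq_zero
    intro t ht
    have := (Finset.mem_Ico.mp ht).2
    rw [intChoose_of_neg (by omega : (t:ℤ)-s < 0)]; ring
  rw [hz, zero_add, Finset.sum_Ico_eq_sum_range]
  have hr : n + 1 - s = m + 2 := by omega
  rw [hr]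
  have hsp : ∀ j ∈ Finset.range (m+2),
      (-1:ℤ)^(s+j) * intChoose ((n:ℤ)-s-1) ((((s+j:ℕ)):ℤ)-s) * intChoose ((n:ℤ)-((s+j:ℕ):ℤ)) u
      = (-1:ℤ)^s * ((-1:ℤ)^j * intChoose m j * intChoose ((m:ℤ)+1-j) u) := by
    intro j hj
    have e1 : (((s+j:ℕ)):ℤ)-s = (j:ℤ) := by push_cast; ring
    have e2 : (n:ℤ)-s-1 = (m:ℤ) := by omega
    have e3 : (n:ℤ)-((s+j:ℕ):ℤ) = (m:ℤ)+1-j := by push_cast; omega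
    rw [e1, e2, e3, pow_add]; ring
  rw [Finset.sum_congr rfl hsp, ← Finset.mul_sum, Finset.sum_range_succ]
  have h0 : intChoose (m:ℤ) ((m:ℤ)+1) = 0 := intChoose_of_gt (by omega)
  push_cast [h0]
  rw [core1 m u]
  have e4 : u - (m:ℤ) = u - ((n:ℤ)-s-1) := by omega
  rw [e4]; ring

lemma hT1 (n s : ℕ) (hs : s + 1 ≤ n) (u : ℤ) :
    ∑ t ∈ Finset.range (n+1),
        (-1:ℤ)^t * intChoose ((n:ℤ)-s-1) ((t:ℤ)-1-s) * intChoose ((n:ℤ)-t) u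
      = -((-1:ℤ)^s * intChoose 0 (u - ((n:ℤ)-s-1))) := by
  set m : ℕ := n - 1 - s with hm
  rw [Finset.range_eq_Ico, ← Finset.sum_Ico_consecutive _ (Nat.zero_le (s+1)) (by omega : s+1 ≤ n+1)]
  have hz : ∑ t ∈ Finset.Ico 0 (s+1),
      (-1:ℤ)^t * intChoose ((n:ℤ)-s-1) ((t:ℤ)-1-s) * intChoose ((n:ℤ)-t) u = 0 := by
    apply Finset.sum_eq_zero
    intro t ht
    have := (Finset.mem_Ico.mp ht).2
    rw [intChoose_of_neg (by omega : (t:ℤ)-1-s < 0)]; ring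
  rw [hz, zero_add, Finset.sum_Ico_eq_sum_range]
  have hr : n + 1 - (s+1) = m + 1 := by omega
  rw [hr]
  have hsp : ∀ j ∈ Finset.range (m+1),
      (-1:ℤ)^(s+1+j) * intChoose ((n:ℤ)-s-1) (((s+1+j:ℕ):ℤ)-1-s) * intChoose ((n:ℤ)-((s+1+j:ℕ):ℤ)) u
      = -((-1:ℤ)^s * ((-1:ℤ)^j * intChoose m j * intChoose ((m:ℤ)-j) u)) := by
    intro j hj
    have e1 : ((s+1+j:ℕ):ℤ)-1-s = (j:ℤ) := by push_cast; ring
    have e2 : (n:ℤ)-s-1 = (m:ℤ) := by omega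
    have e3 : (n:ℤ)-((s+1+j:ℕ):ℤ) = (m:ℤ)-j := by push_cast; omega
    rw [e1, e2, e3, pow_add, pow_add]; ring
  rw [Finset.sum_congr rfl hsp, Finset.sum_neg_distrib, ← Finset.mul_sum, core0 m u]
  have e4 : u - (m:ℤ) = u - ((n:ℤ)-s-1) := by omega
  rw [e4]

lemma swap3 {K : Type*} [CommRing K] (N1 N2 N3 : ℕ) (e A Cc : ℕ → K) (B D : ℕ → ℕ → K) :
    ∑ t ∈ range N1, e t * (∑ s ∈ range N2, A s * B t s) * (∑ u ∈ range N3, Cc u * D t u)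
      = ∑ s ∈ range N2, A s * ∑ u ∈ range N3, Cc u * ∑ t ∈ range N1, e t * B t s * D t u := by
  have h1 : ∀ t, e t * (∑ s ∈ range N2, A s * B t s) * (∑ u ∈ range N3, Cc u * D t u)
      = ∑ s ∈ range N2, ∑ u ∈ range N3, A s * (Cc u * (e t * B t s * D t u)) := by
    intro t
    simp only [Finset.mul_sum, Finset.sum_mul]
    rw [Finset.sum_comm]
    refine Finset.sum_congr rfl fun s _ => Finset.sum_congr rfl fun u _ => by ring
  rw [Finset.sum_congr rfl fun t _ => h1 t, Finset.sum_comm]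
  refine Finset.sum_congr rfl fun s _ => ?_
  rw [Finset.sum_comm, Finset.mul_sum]
  refine Finset.sum_congr rfl fun u _ => ?_
  rw [Finset.mul_sum, Finset.mul_sum]

lemma negpow_sub {K : Type*} [Ring K] {a b : ℕ} (h : b ≤ a) :
    (-1:K)^(a-b) = (-1)^a * (-1)^b := by
  have h2 : a - b + b = a := by omega
  have h3 : (-1:K)^b * (-1:K)^b = 1 := by
    rw [← pow_add, ← two_mul, pow_mul]; norm_num
  calc (-1:K)^(a-b) = (-1:K)^(a-b) * ((-1:K)^b * (-1:K)^b) := by rw [h3, mul_one]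
    _ = (-1:K)^(a-b) * (-1:K)^b * (-1:K)^b := by rw [mul_assoc]
    _ = (-1:K)^a * (-1:K)^b := by rw [← pow_add, h2]

lemma Pextend {K : Type*} [Field K] (x : K) (m : ℕ) (a l : ℤ) (hl : l ≤ (m:ℤ)) :
    Ppoly x (m:ℤ) a l = ∑ s ∈ Finset.range (m+1),
      (-1:K)^s * ((intChoose ((m:ℤ) - a) (s:ℤ) : ℤ) : K) *
        ((intChoose ((m:ℤ) - (s:ℤ) - 1) (l - (s:ℤ)) : ℤ) : K) * x ^ ((m:ℤ) - 2*(s:ℤ)) := by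
  rw [Ppoly]
  refine Finset.sum_subset (Finset.range_subset_range.mpr (by omega : l.toNat + 1 ≤ m + 1)) ?_
  intro s hs hns
  have h1 : l.toNat + 1 ≤ s := by
    by_contra h
    exact hns (Finset.mem_range.mpr (by omega))
  rw [intChoose_of_neg (by omega : l - (s:ℤ) < 0)]
  push_cast
  ring

lemma sum_pick {K : Type*} [Field K] (N w : ℕ) (hw : w < N) (g : ℕ → K) :
    ∑ u ∈ Finset.range N, g u * ((intChoose 0 ((u:ℤ) - (w:ℤ)) : ℤ) : K) = g w := by
  have h : ∀ u ∈ Finset.range N,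
      g u * ((intChoose 0 ((u:ℤ) - (w:ℤ)) : ℤ) : K) = if u = w then g u else 0 := by
    intro u _
    rw [intChoose_zero_eq]
    by_cases h : u = w
    · subst h; simp
    · rw [if_neg (by omega : ¬ ((u:ℤ) - (w:ℤ) = 0)), if_neg h]
      push_cast; ring
  rw [Finset.sum_congr rfl h, Finset.sum_ite_eq' (Finset.range N) w g,
    if_pos (Finset.mem_range.mpr hw)]

lemma sum_pick1 {K : Type*} [Field K] (N w : ℕ) (hw : w + 1 < N) (g : ℕ → K) :
    ∑ u ∈ Finset.range N, g u * ((intChoose 1 ((u:ℤ) - (w:ℤ)) : ℤ) : K) = g w + g (w+1) := by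
  have h : ∀ u ∈ Finset.range N,
      g u * ((intChoose 1 ((u:ℤ) - (w:ℤ)) : ℤ) : K)
      = g u * ((intChoose 0 ((u:ℤ) - (w:ℤ)) : ℤ) : K)
        + g u * ((intChoose 0 ((u:ℤ) - ((w+1:ℕ):ℤ)) : ℤ) : K) := by
    intro u _
    rw [intChoose_one_eq ((u:ℤ) - (w:ℤ)),
      show (u:ℤ) - (w:ℤ) - 1 = (u:ℤ) - ((w+1:ℕ):ℤ) from by push_cast; ring]
    push_cast; ring
  rw [Finset.sum_congr rfl h, Finset.sum_add_distrib,
    sum_pick N w (by omega) g, sum_pick N (w+1) hw g]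


lemma G0_eval {K : Type*} [Field K] (x : K) (hx : x ≠ 0) (n k : ℕ) (μ : ℤ)
    (hk : k + 1 ≤ n) (hμ : μ ≤ (n:ℤ) + 1) :
    ∑ t ∈ Finset.range (n+1),
        (-1:K)^t * Ppoly x (n:ℤ) ((k:ℤ)+1) (t:ℤ) * Ppoly x ((n+1:ℕ):ℤ) ((t:ℤ)+1) μ
      = (-1:K)^k * x^(3:ℤ) * ((intChoose 1 ((k:ℤ)+1-μ) : ℤ) : K)
        + (-1:K)^(k+1) * x * ((intChoose 0 ((k:ℤ)+1-μ) : ℤ) : K) := by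
  have hstep1 : ∑ t ∈ Finset.range (n+1),
      (-1:K)^t * Ppoly x (n:ℤ) ((k:ℤ)+1) (t:ℤ) * Ppoly x ((n+1:ℕ):ℤ) ((t:ℤ)+1) μ
      = ∑ t ∈ Finset.range (n+1), (-1:K)^t *
          (∑ s ∈ Finset.range (n+1),
            ((-1:K)^s * ((intChoose ((n:ℤ) - ((k:ℤ)+1)) (s:ℤ) : ℤ) : K) * x ^ ((n:ℤ) - 2*(s:ℤ))) *
              ((intChoose ((n:ℤ) - (s:ℤ) - 1) ((t:ℤ) - (s:ℤ)) : ℤ) : K)) *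
          (∑ u ∈ Finset.range (n+2),
            ((-1:K)^u * ((intChoose ((n:ℤ) - (u:ℤ)) (μ - (u:ℤ)) : ℤ) : K) * x ^ ((n:ℤ) + 1 - 2*(u:ℤ))) *
              ((intChoose ((n:ℤ) - (t:ℤ)) ((u:ℤ)) : ℤ) : K)) := by
    refine Finset.sum_congr rfl fun t ht => ?_
    have ht' : t ≤ n := by
      have := Finset.mem_range.mp ht; omega
    rw [Pextend x n ((k:ℤ)+1) (t:ℤ) (by exact_mod_cast ht'),
      Pextend x (n+1) ((t:ℤ)+1) μ (by push_cast; omega)]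
    congr 1
    · congr 1
      exact Finset.sum_congr rfl fun s _ => by ring
    · refine Finset.sum_congr rfl fun u _ => ?_
      have e1 : ((n+1:ℕ):ℤ) - ((t:ℤ)+1) = (n:ℤ) - (t:ℤ) := by push_cast; ring
      have e2 : ((n+1:ℕ):ℤ) - (u:ℤ) - 1 = (n:ℤ) - (u:ℤ) := by push_cast; ring
      have e3 : ((n+1:ℕ):ℤ) - 2*(u:ℤ) = (n:ℤ) + 1 - 2*(u:ℤ) := by push_cast; ring
      rw [e1, e2, e3]; ring
  rw [hstep1,
    swap3 (n+1) (n+1) (n+2) (fun t => (-1:K)^t)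
      (fun s => (-1:K)^s * ((intChoose ((n:ℤ) - ((k:ℤ)+1)) (s:ℤ) : ℤ) : K) * x ^ ((n:ℤ) - 2*(s:ℤ)))
      (fun u => (-1:K)^u * ((intChoose ((n:ℤ) - (u:ℤ)) (μ - (u:ℤ)) : ℤ) : K) * x ^ ((n:ℤ) + 1 - 2*(u:ℤ)))
      (fun t s => ((intChoose ((n:ℤ) - (s:ℤ) - 1) ((t:ℤ) - (s:ℤ)) : ℤ) : K))
      (fun t u => ((intChoose ((n:ℤ) - (t:ℤ)) ((u:ℤ)) : ℤ) : K)),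
    Finset.sum_range_succ]
  have hrow0 : ∀ u : ℕ, ∑ t ∈ Finset.range (n+1),
      (-1:K)^t * ((intChoose ((n:ℤ) - (n:ℤ) - 1) ((t:ℤ) - (n:ℤ)) : ℤ) : K) *
        ((intChoose ((n:ℤ) - (t:ℤ)) ((u:ℤ)) : ℤ) : K) = 0 := by
    intro u
    refine Finset.sum_eq_zero fun t _ => ?_
    rw [show (n:ℤ) - (n:ℤ) - 1 = -1 from by ring, intChoose_negone]
    push_cast; ring
  simp only [hrow0, mul_zero, Finset.sum_const_zero, add_zero]
  have hts : ∀ s : ℕ, s < n → ∀ u : ℕ,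
      ∑ t ∈ Finset.range (n+1),
        (-1:K)^t * ((intChoose ((n:ℤ) - (s:ℤ) - 1) ((t:ℤ) - (s:ℤ)) : ℤ) : K) *
          ((intChoose ((n:ℤ) - (t:ℤ)) ((u:ℤ)) : ℤ) : K)
      = (-1:K)^s * ((intChoose 1 ((u:ℤ) - ((n:ℤ) - (s:ℤ) - 1)) : ℤ) : K) := by
    intro s hs u
    have h := hT0 n s (by omega) (u:ℤ)
    calc ∑ t ∈ Finset.range (n+1),
        (-1:K)^t * ((intChoose ((n:ℤ) - (s:ℤ) - 1) ((t:ℤ) - (s:ℤ)) : ℤ) : K) *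
          ((intChoose ((n:ℤ) - (t:ℤ)) ((u:ℤ)) : ℤ) : K)
        = ((∑ t ∈ Finset.range (n+1),
            (-1:ℤ)^t * intChoose ((n:ℤ)-s-1) ((t:ℤ)-s) * intChoose ((n:ℤ)-t) u : ℤ) : K) := by
          push_cast; ring
      _ = (-1:K)^s * ((intChoose 1 ((u:ℤ) - ((n:ℤ) - (s:ℤ) - 1)) : ℤ) : K) := by
          rw [h]; push_cast; ring
  calc ∑ s ∈ Finset.range n,
      (-1:K)^s * ((intChoose ((n:ℤ) - ((k:ℤ) + 1)) (s:ℤ) : ℤ) : K) * x ^ ((n:ℤ) - 2 * (s:ℤ)) *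
        ∑ u ∈ Finset.range (n + 2),
          (-1:K)^u * ((intChoose ((n:ℤ) - (u:ℤ)) (μ - (u:ℤ)) : ℤ) : K) * x ^ ((n:ℤ) + 1 - 2 * (u:ℤ)) *
            ∑ t ∈ Finset.range (n + 1),
              (-1:K)^t * ((intChoose ((n:ℤ) - (s:ℤ) - 1) ((t:ℤ) - (s:ℤ)) : ℤ) : K) *
                ((intChoose ((n:ℤ) - (t:ℤ)) ((u:ℤ)) : ℤ) : K)
      = ∑ s ∈ Finset.range n,
          ((-1:K)^(n-1) * x^(3:ℤ) *
            ((-1:K)^s * ((intChoose ((n:ℤ)-(k:ℤ)-1) (s:ℤ) : ℤ) : K) *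
              ((intChoose ((s:ℤ)+1) ((n:ℤ)-μ) : ℤ) : K))
          + (-1:K)^n * x *
            ((-1:K)^s * ((intChoose ((n:ℤ)-(k:ℤ)-1) (s:ℤ) : ℤ) : K) *
              ((intChoose ((s:ℤ)) ((n:ℤ)-μ) : ℤ) : K))) := by
        refine Finset.sum_congr rfl fun s hs => ?_
        have hs' : s < n := Finset.mem_range.mp hs
        simp only [hts s hs']
        have ew : ((n-1-s:ℕ):ℤ) = (n:ℤ) - (s:ℤ) - 1 := by omega
        have e2 : ((n-s:ℕ):ℤ) = (n:ℤ) - (s:ℤ) := by omega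
        rw [← ew]
        have hu : ∑ u ∈ Finset.range (n + 2),
            (-1:K)^u * ((intChoose ((n:ℤ) - (u:ℤ)) (μ - (u:ℤ)) : ℤ) : K) * x ^ ((n:ℤ) + 1 - 2 * (u:ℤ)) *
              ((-1:K)^s * ((intChoose 1 ((u:ℤ) - ((n-1-s:ℕ):ℤ)) : ℤ) : K))
            = ((-1:K)^(n-1-s) * ((intChoose ((n:ℤ) - ((n-1-s:ℕ):ℤ)) (μ - ((n-1-s:ℕ):ℤ)) : ℤ) : K) * x ^ ((n:ℤ) + 1 - 2 * ((n-1-s:ℕ):ℤ)) * (-1:K)^s)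
            + ((-1:K)^(n-s) * ((intChoose ((n:ℤ) - ((n-s:ℕ):ℤ)) (μ - ((n-s:ℕ):ℤ)) : ℤ) : K) * x ^ ((n:ℤ) + 1 - 2 * ((n-s:ℕ):ℤ)) * (-1:K)^s) := by
          have hp := sum_pick1 (K:=K) (n+2) (n-1-s) (by omega)
            (fun u => (-1:K)^u * ((intChoose ((n:ℤ) - (u:ℤ)) (μ - (u:ℤ)) : ℤ) : K) * x ^ ((n:ℤ) + 1 - 2 * (u:ℤ)) * (-1:K)^s)
          rw [show n-1-s+1 = n-s from by omega] at hp
          rw [← hp]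
          exact Finset.sum_congr rfl fun u _ => by ring
        rw [hu, ew, e2]
        rw [show (n:ℤ) - ((n:ℤ)-(s:ℤ)-1) = (s:ℤ)+1 from by ring]
        rw [show (n:ℤ) - ((n:ℤ)-(s:ℤ)) = (s:ℤ) from by ring]
        rw [intChoose_symm (show (0:ℤ) ≤ (s:ℤ)+1 from by positivity) (μ - ((n:ℤ)-(s:ℤ)-1))]
        rw [show (s:ℤ)+1 - (μ - ((n:ℤ)-(s:ℤ)-1)) = (n:ℤ) - μ from by ring]
        rw [intChoose_symm (Int.natCast_nonneg s) (μ - ((n:ℤ)-(s:ℤ)))]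
        rw [show (s:ℤ) - (μ - ((n:ℤ)-(s:ℤ))) = (n:ℤ) - μ from by ring]
        rw [negpow_sub (show s ≤ n-1 from by omega), negpow_sub (show s ≤ n from by omega)]
        rw [show (n:ℤ) - ((k:ℤ)+1) = (n:ℤ)-(k:ℤ)-1 from by ring]
        have h1 : x ^ ((n:ℤ) - 2*(s:ℤ)) * x ^ ((n:ℤ) + 1 - 2*((n:ℤ)-(s:ℤ)-1)) = x^(3:ℤ) := by
          rw [← zpow_add₀ hx]; congr 1; ring
        have h2 : x ^ ((n:ℤ) - 2*(s:ℤ)) * x ^ ((n:ℤ) + 1 - 2*((n:ℤ)-(s:ℤ))) = x := by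
          rw [← zpow_add₀ hx]
          rw [show (n:ℤ) - 2*(s:ℤ) + ((n:ℤ) + 1 - 2*((n:ℤ)-(s:ℤ))) = (1:ℤ) from by ring, zpow_one]
        have h5 : (-1:K)^s * (-1:K)^s = 1 := by
          rw [← pow_add, ← two_mul, pow_mul]; norm_num
        set P := x ^ ((n:ℤ) - 2*(s:ℤ)) with hP
        set Q := x ^ ((n:ℤ) + 1 - 2*((n:ℤ)-(s:ℤ)-1)) with hQ
        set R := x ^ ((n:ℤ) + 1 - 2*((n:ℤ)-(s:ℤ))) with hR
        set X := x^(3:ℤ) with hX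
        set a := (-1:K)^(n-1) with ha
        set b := (-1:K)^n with hb
        set o := (-1:K)^s with ho
        set C := ((intChoose ((n:ℤ)-(k:ℤ)-1) (s:ℤ) : ℤ) : K) with hC
        set Ca := ((intChoose ((s:ℤ)+1) ((n:ℤ)-μ) : ℤ) : K) with hCa
        set Cb := ((intChoose ((s:ℤ)) ((n:ℤ)-μ) : ℤ) : K) with hCb
        linear_combination (a*C*Ca*o*o*o) * h1 + (b*C*Cb*o*o*o) * h2 + (a*C*Ca*o*X + b*C*Cb*o*x) * h5
    _ = (-1:K)^k * x^(3:ℤ) * ((intChoose 1 ((k:ℤ)+1-μ) : ℤ) : K)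
        + (-1:K)^(k+1) * x * ((intChoose 0 ((k:ℤ)+1-μ) : ℤ) : K) := by
        rw [Finset.sum_add_distrib, ← Finset.mul_sum, ← Finset.mul_sum]
        have hsh1 : ∑ s ∈ Finset.range ((n-1-k)+1),
            (-1:K)^s * ((intChoose ((n:ℤ)-(k:ℤ)-1) (s:ℤ) : ℤ) : K) *
              ((intChoose ((s:ℤ)+1) ((n:ℤ)-μ) : ℤ) : K)
            = ∑ s ∈ Finset.range n,
            (-1:K)^s * ((intChoose ((n:ℤ)-(k:ℤ)-1) (s:ℤ) : ℤ) : K) *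
              ((intChoose ((s:ℤ)+1) ((n:ℤ)-μ) : ℤ) : K) := by
          refine Finset.sum_subset (Finset.range_subset_range.mpr (by omega)) ?_
          intro t ht hnt
          have h1 : n-1-k+1 ≤ t := by
            by_contra hcon
            exact hnt (Finset.mem_range.mpr (by omega))
          rw [intChoose_of_gt (show (n:ℤ)-(k:ℤ)-1 < (t:ℤ) from by omega)]
          push_cast; ring
        have hsh2 : ∑ s ∈ Finset.range ((n-1-k)+1),
            (-1:K)^s * ((intChoose ((n:ℤ)-(k:ℤ)-1) (s:ℤ) : ℤ) : K) *
              ((intChoose ((s:ℤ)) ((n:ℤ)-μ) : ℤ) : K)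
            = ∑ s ∈ Finset.range n,
            (-1:K)^s * ((intChoose ((n:ℤ)-(k:ℤ)-1) (s:ℤ) : ℤ) : K) *
              ((intChoose ((s:ℤ)) ((n:ℤ)-μ) : ℤ) : K) := by
          refine Finset.sum_subset (Finset.range_subset_range.mpr (by omega)) ?_
          intro t ht hnt
          have h1 : n-1-k+1 ≤ t := by
            by_contra hcon
            exact hnt (Finset.mem_range.mpr (by omega))
          rw [intChoose_of_gt (show (n:ℤ)-(k:ℤ)-1 < (t:ℤ) from by omega)]
          push_cast; ring
        rw [← hsh1, ← hsh2]
        have em : ((n-1-k:ℕ):ℤ) = (n:ℤ)-(k:ℤ)-1 := by omega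
        have hc1 : ∑ s ∈ Finset.range ((n-1-k)+1),
            (-1:K)^s * ((intChoose ((n:ℤ)-(k:ℤ)-1) (s:ℤ) : ℤ) : K) *
              ((intChoose ((s:ℤ)+1) ((n:ℤ)-μ) : ℤ) : K)
            = (-1:K)^(n-1-k) * ((intChoose 1 ((k:ℤ)+1-μ) : ℤ) : K) := by
          have hz := coreB1 (n-1-k) ((n:ℤ)-μ)
          rw [show ((n:ℤ)-μ) - ((n-1-k:ℕ):ℤ) = (k:ℤ)+1-μ from by omega] at hz
          calc ∑ s ∈ Finset.range ((n-1-k)+1),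
              (-1:K)^s * ((intChoose ((n:ℤ)-(k:ℤ)-1) (s:ℤ) : ℤ) : K) *
                ((intChoose ((s:ℤ)+1) ((n:ℤ)-μ) : ℤ) : K)
              = ((∑ s ∈ Finset.range ((n-1-k)+1),
                (-1:ℤ)^s * intChoose ((n-1-k:ℕ):ℤ) (s:ℤ) * intChoose ((s:ℤ)+1) ((n:ℤ)-μ) : ℤ) : K) := by
                push_cast [em]; ring
            _ = (-1:K)^(n-1-k) * ((intChoose 1 ((k:ℤ)+1-μ) : ℤ) : K) := by
                rw [hz]; push_cast; ring
        have hc2 : ∑ s ∈ Finset.range ((n-1-k)+1),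
            (-1:K)^s * ((intChoose ((n:ℤ)-(k:ℤ)-1) (s:ℤ) : ℤ) : K) *
              ((intChoose ((s:ℤ)) ((n:ℤ)-μ) : ℤ) : K)
            = (-1:K)^(n-1-k) * ((intChoose 0 ((k:ℤ)+1-μ) : ℤ) : K) := by
          have hz := coreB0 (n-1-k) ((n:ℤ)-μ)
          rw [show ((n:ℤ)-μ) - ((n-1-k:ℕ):ℤ) = (k:ℤ)+1-μ from by omega] at hz
          calc ∑ s ∈ Finset.range ((n-1-k)+1),
              (-1:K)^s * ((intChoose ((n:ℤ)-(k:ℤ)-1) (s:ℤ) : ℤ) : K) *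
                ((intChoose ((s:ℤ)) ((n:ℤ)-μ) : ℤ) : K)
              = ((∑ s ∈ Finset.range ((n-1-k)+1),
                (-1:ℤ)^s * intChoose ((n-1-k:ℕ):ℤ) (s:ℤ) * intChoose ((s:ℤ)) ((n:ℤ)-μ) : ℤ) : K) := by
                push_cast [em]; ring
            _ = (-1:K)^(n-1-k) * ((intChoose 0 ((k:ℤ)+1-μ) : ℤ) : K) := by
                rw [hz]; push_cast; ring
        rw [hc1, hc2, negpow_sub (show k ≤ n-1 from by omega)]
        have hbn : (-1:K)^n = (-1:K)^(n-1) * (-1:K) := by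
          rw [← pow_succ, show n-1+1 = n from by omega]
        have hbk : (-1:K)^(k+1) = (-1:K)^k * (-1:K) := pow_succ _ _
        rw [hbn, hbk]
        have hsq : (-1:K)^(n-1) * (-1:K)^(n-1) = 1 := by
          rw [← pow_add, ← two_mul, pow_mul]; norm_num
        linear_combination ((-1:K)^k * x^(3:ℤ) * ((intChoose 1 ((k:ℤ)+1-μ) : ℤ) : K)
          - (-1:K)^k * x * ((intChoose 0 ((k:ℤ)+1-μ) : ℤ) : K)) * hsq

lemma G1_eval {K : Type*} [Field K] (x : K) (hx : x ≠ 0) (n k : ℕ) (μ : ℤ)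
    (hk : k + 1 ≤ n) (hμ : μ ≤ (n:ℤ) + 1) :
    ∑ t ∈ Finset.range (n+1),
        (-1:K)^t * Ppoly x (n:ℤ) ((k:ℤ)+1) ((t:ℤ)-1) * Ppoly x ((n+1:ℕ):ℤ) ((t:ℤ)+1) μ
      = (-1:K)^(k+1) * x^(3:ℤ) * ((intChoose 1 ((k:ℤ)+1-μ) : ℤ) : K) := by
  have hstep1 : ∑ t ∈ Finset.range (n+1),
      (-1:K)^t * Ppoly x (n:ℤ) ((k:ℤ)+1) ((t:ℤ)-1) * Ppoly x ((n+1:ℕ):ℤ) ((t:ℤ)+1) μ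
      = ∑ t ∈ Finset.range (n+1), (-1:K)^t *
          (∑ s ∈ Finset.range (n+1),
            ((-1:K)^s * ((intChoose ((n:ℤ) - ((k:ℤ)+1)) (s:ℤ) : ℤ) : K) * x ^ ((n:ℤ) - 2*(s:ℤ))) *
              ((intChoose ((n:ℤ) - (s:ℤ) - 1) ((t:ℤ) - 1 - (s:ℤ)) : ℤ) : K)) *
          (∑ u ∈ Finset.range (n+2),
            ((-1:K)^u * ((intChoose ((n:ℤ) - (u:ℤ)) (μ - (u:ℤ)) : ℤ) : K) * x ^ ((n:ℤ) + 1 - 2*(u:ℤ))) *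
              ((intChoose ((n:ℤ) - (t:ℤ)) ((u:ℤ)) : ℤ) : K)) := by
    refine Finset.sum_congr rfl fun t ht => ?_
    have ht' : t ≤ n := by
      have := Finset.mem_range.mp ht; omega
    rw [Pextend x n ((k:ℤ)+1) ((t:ℤ)-1) (by omega),
      Pextend x (n+1) ((t:ℤ)+1) μ (by push_cast; omega)]
    congr 1
    · congr 1
      exact Finset.sum_congr rfl fun s _ => by ring
    · refine Finset.sum_congr rfl fun u _ => ?_
      have e1 : ((n+1:ℕ):ℤ) - ((t:ℤ)+1) = (n:ℤ) - (t:ℤ) := by push_cast; ring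
      have e2 : ((n+1:ℕ):ℤ) - (u:ℤ) - 1 = (n:ℤ) - (u:ℤ) := by push_cast; ring
      have e3 : ((n+1:ℕ):ℤ) - 2*(u:ℤ) = (n:ℤ) + 1 - 2*(u:ℤ) := by push_cast; ring
      rw [e1, e2, e3]; ring
  rw [hstep1,
    swap3 (n+1) (n+1) (n+2) (fun t => (-1:K)^t)
      (fun s => (-1:K)^s * ((intChoose ((n:ℤ) - ((k:ℤ)+1)) (s:ℤ) : ℤ) : K) * x ^ ((n:ℤ) - 2*(s:ℤ)))
      (fun u => (-1:K)^u * ((intChoose ((n:ℤ) - (u:ℤ)) (μ - (u:ℤ)) : ℤ) : K) * x ^ ((n:ℤ) + 1 - 2*(u:ℤ)))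
      (fun t s => ((intChoose ((n:ℤ) - (s:ℤ) - 1) ((t:ℤ) - 1 - (s:ℤ)) : ℤ) : K))
      (fun t u => ((intChoose ((n:ℤ) - (t:ℤ)) ((u:ℤ)) : ℤ) : K)),
    Finset.sum_range_succ]
  have hrow0 : ∀ u : ℕ, ∑ t ∈ Finset.range (n+1),
      (-1:K)^t * ((intChoose ((n:ℤ) - (n:ℤ) - 1) ((t:ℤ) - 1 - (n:ℤ)) : ℤ) : K) *
        ((intChoose ((n:ℤ) - (t:ℤ)) ((u:ℤ)) : ℤ) : K) = 0 := by
    intro u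
    refine Finset.sum_eq_zero fun t _ => ?_
    rw [show (n:ℤ) - (n:ℤ) - 1 = -1 from by ring, intChoose_negone]
    push_cast; ring
  simp only [hrow0, mul_zero, Finset.sum_const_zero, add_zero]
  have hts : ∀ s : ℕ, s < n → ∀ u : ℕ,
      ∑ t ∈ Finset.range (n+1),
        (-1:K)^t * ((intChoose ((n:ℤ) - (s:ℤ) - 1) ((t:ℤ) - 1 - (s:ℤ)) : ℤ) : K) *
          ((intChoose ((n:ℤ) - (t:ℤ)) ((u:ℤ)) : ℤ) : K)
      = -((-1:K)^s * ((intChoose 0 ((u:ℤ) - ((n:ℤ) - (s:ℤ) - 1)) : ℤ) : K)) := by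
    intro s hs u
    have h := hT1 n s (by omega) (u:ℤ)
    calc ∑ t ∈ Finset.range (n+1),
        (-1:K)^t * ((intChoose ((n:ℤ) - (s:ℤ) - 1) ((t:ℤ) - 1 - (s:ℤ)) : ℤ) : K) *
          ((intChoose ((n:ℤ) - (t:ℤ)) ((u:ℤ)) : ℤ) : K)
        = ((∑ t ∈ Finset.range (n+1),
            (-1:ℤ)^t * intChoose ((n:ℤ)-s-1) ((t:ℤ)-1-s) * intChoose ((n:ℤ)-t) u : ℤ) : K) := by
          push_cast; ring
      _ = -((-1:K)^s * ((intChoose 0 ((u:ℤ) - ((n:ℤ) - (s:ℤ) - 1)) : ℤ) : K)) := by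
          rw [h]; push_cast; ring
  calc ∑ s ∈ Finset.range n,
      (-1:K)^s * ((intChoose ((n:ℤ) - ((k:ℤ) + 1)) (s:ℤ) : ℤ) : K) * x ^ ((n:ℤ) - 2 * (s:ℤ)) *
        ∑ u ∈ Finset.range (n + 2),
          (-1:K)^u * ((intChoose ((n:ℤ) - (u:ℤ)) (μ - (u:ℤ)) : ℤ) : K) * x ^ ((n:ℤ) + 1 - 2 * (u:ℤ)) *
            ∑ t ∈ Finset.range (n + 1),
              (-1:K)^t * ((intChoose ((n:ℤ) - (s:ℤ) - 1) ((t:ℤ) - 1 - (s:ℤ)) : ℤ) : K) *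
                ((intChoose ((n:ℤ) - (t:ℤ)) ((u:ℤ)) : ℤ) : K)
      = ∑ s ∈ Finset.range n,
          ((-1:K)^n * x^(3:ℤ) *
            ((-1:K)^s * ((intChoose ((n:ℤ)-(k:ℤ)-1) (s:ℤ) : ℤ) : K) *
              ((intChoose ((s:ℤ)+1) ((n:ℤ)-μ) : ℤ) : K))) := by
        refine Finset.sum_congr rfl fun s hs => ?_
        have hs' : s < n := Finset.mem_range.mp hs
        simp only [hts s hs']
        have ew : ((n-1-s:ℕ):ℤ) = (n:ℤ) - (s:ℤ) - 1 := by omega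
        rw [← ew]
        have hu : ∑ u ∈ Finset.range (n + 2),
            (-1:K)^u * ((intChoose ((n:ℤ) - (u:ℤ)) (μ - (u:ℤ)) : ℤ) : K) * x ^ ((n:ℤ) + 1 - 2 * (u:ℤ)) *
              -((-1:K)^s * ((intChoose 0 ((u:ℤ) - ((n-1-s:ℕ):ℤ)) : ℤ) : K))
            = (-1:K)^(n-1-s) * ((intChoose ((n:ℤ) - ((n-1-s:ℕ):ℤ)) (μ - ((n-1-s:ℕ):ℤ)) : ℤ) : K) *
                x ^ ((n:ℤ) + 1 - 2 * ((n-1-s:ℕ):ℤ)) * (-(-1:K)^s) := by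
          have hp := sum_pick (K:=K) (n+2) (n-1-s) (by omega)
            (fun u => (-1:K)^u * ((intChoose ((n:ℤ) - (u:ℤ)) (μ - (u:ℤ)) : ℤ) : K) *
              x ^ ((n:ℤ) + 1 - 2 * (u:ℤ)) * (-(-1:K)^s))
          rw [← hp]
          exact Finset.sum_congr rfl fun u _ => by ring
        rw [hu, ew]
        rw [show (n:ℤ) - ((n:ℤ)-(s:ℤ)-1) = (s:ℤ)+1 from by ring]
        rw [intChoose_symm (show (0:ℤ) ≤ (s:ℤ)+1 from by positivity) (μ - ((n:ℤ)-(s:ℤ)-1))]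
        rw [show (s:ℤ)+1 - (μ - ((n:ℤ)-(s:ℤ)-1)) = (n:ℤ) - μ from by ring]
        rw [negpow_sub (show s ≤ n-1 from by omega)]
        rw [show (n:ℤ) - ((k:ℤ)+1) = (n:ℤ)-(k:ℤ)-1 from by ring]
        have h1 : x ^ ((n:ℤ) - 2*(s:ℤ)) * x ^ ((n:ℤ) + 1 - 2*((n:ℤ)-(s:ℤ)-1)) = x^(3:ℤ) := by
          rw [← zpow_add₀ hx]; congr 1; ring
        have h5 : (-1:K)^s * (-1:K)^s = 1 := by
          rw [← pow_add, ← two_mul, pow_mul]; norm_num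
        have hbn : (-1:K)^n = (-1:K)^(n-1) * (-1:K) := by
          rw [← pow_succ, show n-1+1 = n from by omega]
        rw [hbn]
        set P := x ^ ((n:ℤ) - 2*(s:ℤ)) with hP
        set Q := x ^ ((n:ℤ) + 1 - 2*((n:ℤ)-(s:ℤ)-1)) with hQ
        set X := x^(3:ℤ) with hX
        set a := (-1:K)^(n-1) with ha
        set o := (-1:K)^s with ho
        set C := ((intChoose ((n:ℤ)-(k:ℤ)-1) (s:ℤ) : ℤ) : K) with hC
        set Ca := ((intChoose ((s:ℤ)+1) ((n:ℤ)-μ) : ℤ) : K) with hCa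
        linear_combination (-(a*C*Ca*o*o*o)) * h1 + (-(a*C*Ca*o*X)) * h5
    _ = (-1:K)^(k+1) * x^(3:ℤ) * ((intChoose 1 ((k:ℤ)+1-μ) : ℤ) : K) := by
        rw [← Finset.mul_sum]
        have hsh1 : ∑ s ∈ Finset.range ((n-1-k)+1),
            (-1:K)^s * ((intChoose ((n:ℤ)-(k:ℤ)-1) (s:ℤ) : ℤ) : K) *
              ((intChoose ((s:ℤ)+1) ((n:ℤ)-μ) : ℤ) : K)
            = ∑ s ∈ Finset.range n,
            (-1:K)^s * ((intChoose ((n:ℤ)-(k:ℤ)-1) (s:ℤ) : ℤ) : K) *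
              ((intChoose ((s:ℤ)+1) ((n:ℤ)-μ) : ℤ) : K) := by
          refine Finset.sum_subset (Finset.range_subset_range.mpr (by omega)) ?_
          intro t ht hnt
          have h1 : n-1-k+1 ≤ t := by
            by_contra hcon
            exact hnt (Finset.mem_range.mpr (by omega))
          rw [intChoose_of_gt (show (n:ℤ)-(k:ℤ)-1 < (t:ℤ) from by omega)]
          push_cast; ring
        rw [← hsh1]
        have em : ((n-1-k:ℕ):ℤ) = (n:ℤ)-(k:ℤ)-1 := by omega
        have hc1 : ∑ s ∈ Finset.range ((n-1-k)+1),
            (-1:K)^s * ((intChoose ((n:ℤ)-(k:ℤ)-1) (s:ℤ) : ℤ) : K) *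
              ((intChoose ((s:ℤ)+1) ((n:ℤ)-μ) : ℤ) : K)
            = (-1:K)^(n-1-k) * ((intChoose 1 ((k:ℤ)+1-μ) : ℤ) : K) := by
          have hz := coreB1 (n-1-k) ((n:ℤ)-μ)
          rw [show ((n:ℤ)-μ) - ((n-1-k:ℕ):ℤ) = (k:ℤ)+1-μ from by omega] at hz
          calc ∑ s ∈ Finset.range ((n-1-k)+1),
              (-1:K)^s * ((intChoose ((n:ℤ)-(k:ℤ)-1) (s:ℤ) : ℤ) : K) *
                ((intChoose ((s:ℤ)+1) ((n:ℤ)-μ) : ℤ) : K)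
              = ((∑ s ∈ Finset.range ((n-1-k)+1),
                (-1:ℤ)^s * intChoose ((n-1-k:ℕ):ℤ) (s:ℤ) * intChoose ((s:ℤ)+1) ((n:ℤ)-μ) : ℤ) : K) := by
                push_cast [em]; ring
            _ = (-1:K)^(n-1-k) * ((intChoose 1 ((k:ℤ)+1-μ) : ℤ) : K) := by
                rw [hz]; push_cast; ring
        rw [hc1, negpow_sub (show k ≤ n-1 from by omega)]
        have hbn : (-1:K)^n = (-1:K)^(n-1) * (-1:K) := by
          rw [← pow_succ, show n-1+1 = n from by omega]
        have hbk : (-1:K)^(k+1) = (-1:K)^k * (-1:K) := pow_succ _ _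
        rw [hbn, hbk]
        have hsq : (-1:K)^(n-1) * (-1:K)^(n-1) = 1 := by
          rw [← pow_add, ← two_mul, pow_mul]; norm_num
        linear_combination (-((-1:K)^k * x^(3:ℤ) * ((intChoose 1 ((k:ℤ)+1-μ) : ℤ) : K))) * hsq

lemma ic1_even {a : ℤ} (h : Even a) : intChoose 1 a = if a = 0 then 1 else 0 := by
  obtain ⟨m, hm⟩ := h
  rw [intChoose_one_eq, intChoose_zero_eq, intChoose_zero_eq]
  split_ifs <;> omega

lemma ic1_odd {a : ℤ} (h : Odd a) : intChoose 1 a = if a = 1 then 1 else 0 := by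
  obtain ⟨m, hm⟩ := h
  rw [intChoose_one_eq, intChoose_zero_eq, intChoose_zero_eq]
  split_ifs <;> omega


/-- For k − l odd, A_{k,l} = ∑_{t=0}^{n} (−1)^t M_{n;k,t} M_{n+1;t,l} = (−1)^{k+1} c δ_{k,l-1}. -/
theorem MXXZ_matrix_element {K : Type*} [Field K] (c s ξ : K)
    (hc : c ≠ 0) (hs : s ≠ 0) (hξ : ξ ≠ 0) (hpyth : c ^ 2 + s ^ 2 = 1)
    (hden : ξ + ξ⁻¹ ≠ 0) (n k l : ℕ) (hn : 1 ≤ n) (hk : k ≤ n - 1) (hl : l ≤ n + 1)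
    (hodd : Odd ((k : ℤ) - (l : ℤ))) :
    ∑ t ∈ Finset.range (n + 1),
        (-1 : K) ^ t * MXXZ c s ξ n k (t : ℤ) * MXXZ c s ξ (n + 1) t (l : ℤ)
      = (-1 : K) ^ (k + 1) * c * (if (k : ℤ) = (l : ℤ) - 1 then 1 else 0) := by
  obtain ⟨m, hm⟩ := hodd
  have hk' : k + 1 ≤ n := by omega
  have hl' : (l:ℤ) ≤ (n:ℤ) + 1 := by exact_mod_cast Nat.cast_le.mpr hl
  set α : K := (ξ - ξ⁻¹) / ((ξ + ξ⁻¹) * s) with hα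
  set β : K := 2 / ((ξ + ξ⁻¹) * c) with hβ
  have hexp : ∑ t ∈ Finset.range (n + 1),
      (-1 : K) ^ t * MXXZ c s ξ n k (t : ℤ) * MXXZ c s ξ (n + 1) t (l : ℤ)
      = α*α * (∑ t ∈ Finset.range (n+1),
          (-1:K)^t * Ppoly c (n:ℤ) ((k:ℤ)+1) (t:ℤ) * Ppoly c ((n+1:ℕ):ℤ) ((t:ℤ)+1) (l:ℤ))
        - α*β * (∑ t ∈ Finset.range (n+1),
          (-1:K)^t * Ppoly c (n:ℤ) ((k:ℤ)+1) (t:ℤ) * Ppoly c ((n+1:ℕ):ℤ) ((t:ℤ)+1) ((l:ℤ)-1))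
        - α*β * (∑ t ∈ Finset.range (n+1),
          (-1:K)^t * Ppoly c (n:ℤ) ((k:ℤ)+1) ((t:ℤ)-1) * Ppoly c ((n+1:ℕ):ℤ) ((t:ℤ)+1) (l:ℤ))
        + β*β * (∑ t ∈ Finset.range (n+1),
          (-1:K)^t * Ppoly c (n:ℤ) ((k:ℤ)+1) ((t:ℤ)-1) * Ppoly c ((n+1:ℕ):ℤ) ((t:ℤ)+1) ((l:ℤ)-1)) := by
    rw [Finset.mul_sum, Finset.mul_sum, Finset.mul_sum, Finset.mul_sum,
      ← Finset.sum_sub_distrib, ← Finset.sum_sub_distrib, ← Finset.sum_add_distrib]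
    refine Finset.sum_congr rfl fun t _ => ?_
    simp only [MXXZ]
    ring
  rw [hexp, G0_eval c hc n k (l:ℤ) hk' hl', G0_eval c hc n k ((l:ℤ)-1) hk' (by omega),
    G1_eval c hc n k (l:ℤ) hk' hl', G1_eval c hc n k ((l:ℤ)-1) hk' (by omega)]
  have hev1 : intChoose 1 ((k:ℤ)+1-(l:ℤ)) = if (k:ℤ) = (l:ℤ)-1 then 1 else 0 := by
    rw [ic1_even ⟨m+1, by omega⟩]
    exact if_congr (by omega) rfl rfl
  have hev2 : intChoose 0 ((k:ℤ)+1-(l:ℤ)) = if (k:ℤ) = (l:ℤ)-1 then 1 else 0 := by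
    rw [intChoose_zero_eq]
    exact if_congr (by omega) rfl rfl
  have hev3 : intChoose 1 ((k:ℤ)+1-((l:ℤ)-1)) = if (k:ℤ) = (l:ℤ)-1 then 1 else 0 := by
    rw [ic1_odd ⟨m+1, by omega⟩]
    exact if_congr (by omega) rfl rfl
  have hev4 : intChoose 0 ((k:ℤ)+1-((l:ℤ)-1)) = 0 := by
    rw [intChoose_zero_eq, if_neg (by omega)]
  rw [hev1, hev2, hev3, hev4]
  push_cast
  set δ : K := if (k:ℤ) = (l:ℤ)-1 then (1:K) else 0 with hδ
  have hinv : ξ * ξ⁻¹ = 1 := mul_inv_cancel₀ hξ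
  have hc3 : c ^ (3:ℤ) = c*c*c := by
    rw [show (3:ℤ) = ((3:ℕ):ℤ) from by norm_num, zpow_natCast]; ring
  have hcore : α*α*(c - c^(3:ℤ)) + β*β*c^(3:ℤ) = c := by
    have hmul : ξ*(ξ+ξ⁻¹) = ξ*ξ+1 := by linear_combination hinv
    have hd2 : ξ*ξ+1 ≠ 0 := by rw [← hmul]; exact mul_ne_zero hξ hden
    rw [hα, hβ, hc3]
    field_simp
    rw [div_eq_iff (pow_ne_zero 2 (by rw [pow_two]; exact hd2))]
    linear_combination (-(ξ^2-1)^2) * hpyth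
  simp only [pow_succ, hc3] at *
  linear_combination (-((-1:K)^k * δ)) * hcore
end
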